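/- Let p, q be probability densities on a measure space with Kullback–Leibler divergence D(p‖q). Then the L¹-distance satisfies ∫|p − q| ≤ 2·√(1 − exp(−D(p‖q))), and consequently ∫|p − q| ≤ √(2·D(p‖q)). -/

import Mathlib

open MeasureTheory Real
open scoped NNReal ENNReal
open Real

/-- `H t = (t+1) log t - 2(t-1)` -/
private noncomputable def Hfun (t : ℝ) : ℝ := (t + 1) * Real.log t - 2 * (t - 1)

private lemma Hfun_hasDeriv {t : ℝ} (ht : 0 < t) :
    HasDerivAt Hfun (Real.log t + (t + 1) * t⁻¹ - 2) t := by
  have h1 : HasDerivAt (fun t : ℝ => (t + 1) * Real.log t)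
      (1 * Real.log t + (t + 1) * t⁻¹) t :=
    (((hasDerivAt_id t).add_const 1)).mul (Real.hasDerivAt_log ht.ne')
  have h2 : HasDerivAt (fun t : ℝ => 2 * (t - 1)) 2 t := by
    simpa using ((hasDerivAt_id t).sub_const 1).const_mul 2
  exact (h1.sub h2).congr_deriv (by ring)

private lemma log_lower {t : ℝ} (ht : 0 < t) : 1 - t⁻¹ ≤ Real.log t := by
  have := Real.log_le_sub_one_of_pos (inv_pos.mpr ht)
  rw [Real.log_inv] at this; linarith

private lemma Hfun_mono : MonotoneOn Hfun (Set.Ioi (0 : ℝ)) := by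
  apply monotoneOn_of_deriv_nonneg (convex_Ioi 0)
  · intro x hx
    exact ((Hfun_hasDeriv hx).continuousAt).continuousWithinAt
  · intro x hx
    rw [interior_Ioi] at hx
    exact (Hfun_hasDeriv hx).differentiableAt.differentiableWithinAt
  · intro x hx
    rw [interior_Ioi] at hx
    rw [(Hfun_hasDeriv hx).deriv]
    have h1 := log_lower hx
    have h2 : (x + 1) * x⁻¹ = 1 + x⁻¹ := by
      rw [add_mul, one_mul, mul_inv_cancel₀ (ne_of_gt (Set.mem_Ioi.mp hx))]
    rw [h2]; linarith

/-- `G t = (2t+4)(t log t - t + 1) - 3(t-1)^2` -/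
private noncomputable def Gfun (t : ℝ) : ℝ :=
  (2 * t + 4) * (t * Real.log t - t + 1) - 3 * (t - 1) ^ 2

private lemma Gfun_hasDeriv {t : ℝ} (ht : 0 < t) :
    HasDerivAt Gfun (4 * Hfun t) t := by
  have h1 : HasDerivAt (fun t : ℝ => t * Real.log t) (Real.log t + 1) t :=
    Real.hasDerivAt_mul_log ht.ne'
  have h2 : HasDerivAt (fun t : ℝ => t * Real.log t - t + 1) (Real.log t + 1 - 1) t :=
    (h1.sub (hasDerivAt_id t)).add_const 1
  have h3 : HasDerivAt (fun t : ℝ => 2 * t + 4) 2 t := by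
    simpa using ((hasDerivAt_id t).const_mul 2).add_const 4
  have h4 := h3.mul h2
  have h5 : HasDerivAt (fun t : ℝ => 3 * (t - 1) ^ 2) (3 * (2 * (t - 1))) t := by
    simpa using (((hasDerivAt_id t).sub_const 1).pow 2).const_mul 3
  have h6 := h4.sub h5
  exact h6.congr_deriv (by unfold Hfun; ring)

private lemma Gfun_nonneg {t : ℝ} (ht : 0 < t) : 0 ≤ Gfun t := by
  have hG1 : Gfun 1 = 0 := by simp [Gfun]
  rcases le_total 1 t with h1t | ht1
  · have hmono : MonotoneOn Gfun (Set.Ici (1 : ℝ)) := by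
      apply monotoneOn_of_deriv_nonneg (convex_Ici 1)
      · intro x hx
        exact (Gfun_hasDeriv (lt_of_lt_of_le one_pos hx)).continuousAt.continuousWithinAt
      · intro x hx
        rw [interior_Ici] at hx
        exact (Gfun_hasDeriv (lt_trans one_pos hx)).differentiableAt.differentiableWithinAt
      · intro x hx
        rw [interior_Ici] at hx
        rw [(Gfun_hasDeriv (lt_trans one_pos hx)).deriv]
        have hH1 : Hfun 1 = 0 := by simp [Hfun]
        have := Hfun_mono (Set.mem_Ioi.mpr one_pos) (Set.mem_Ioi.mpr (lt_trans one_pos hx)) hx.le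
        rw [hH1] at this
        linarith
    have := hmono (Set.mem_Ici.mpr le_rfl) (Set.mem_Ici.mpr h1t) h1t
    rw [hG1] at this; exact this
  · have hanti : AntitoneOn Gfun (Set.Ioc (0 : ℝ) 1) := by
      apply antitoneOn_of_deriv_nonpos (convex_Ioc 0 1)
      · intro x hx
        exact (Gfun_hasDeriv hx.1).continuousAt.continuousWithinAt
      · intro x hx
        rw [interior_Ioc] at hx
        exact (Gfun_hasDeriv hx.1).differentiableAt.differentiableWithinAt
      · intro x hx
        rw [interior_Ioc] at hx
        rw [(Gfun_hasDeriv hx.1).deriv]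
        have hH1 : Hfun 1 = 0 := by simp [Hfun]
        have := Hfun_mono (Set.mem_Ioi.mpr hx.1) (Set.mem_Ioi.mpr one_pos) hx.2.le
        rw [hH1] at this
        linarith
    have := hanti (Set.mem_Ioc.mpr ⟨ht, ht1⟩) (Set.mem_Ioc.mpr ⟨one_pos, le_rfl⟩) ht1
    rw [hG1] at this; exact this

/-- Key pointwise inequality for Pinsker. -/
lemma pinsker_pointwise {t : ℝ} (ht : 0 ≤ t) :
    3 * (t - 1) ^ 2 ≤ (2 * t + 4) * (t * Real.log t - t + 1) := by
  rcases ht.eq_or_lt with h | h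
  · simp [← h]; norm_num
  · have := Gfun_nonneg h
    unfold Gfun at this; linarith
open MeasureTheory Real

/-- Cauchy–Schwarz for integrals of nonnegative functions. -/
lemma integral_mul_sq_le {α : Type*} [MeasurableSpace α] {μ : Measure α} {f g : α → ℝ}
    (hf0 : ∀ x, 0 ≤ f x) (hg0 : ∀ x, 0 ≤ g x)
    (hfm : AEStronglyMeasurable f μ) (hgm : AEStronglyMeasurable g μ)
    (hf2 : Integrable (fun x => f x ^ 2) μ) (hg2 : Integrable (fun x => g x ^ 2) μ) :
    (∫ x, f x * g x ∂μ) ^ 2 ≤ (∫ x, f x ^ 2 ∂μ) * (∫ x, g x ^ 2 ∂μ) := by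
  have hpq : (2 : ℝ).HolderConjugate 2 := ⟨by norm_num, by norm_num, by norm_num⟩
  have hfL : MemLp f (ENNReal.ofReal 2) μ := by
    rw [show ENNReal.ofReal 2 = 2 by norm_num]
    exact (memLp_two_iff_integrable_sq hfm).mpr hf2
  have hgL : MemLp g (ENNReal.ofReal 2) μ := by
    rw [show ENNReal.ofReal 2 = 2 by norm_num]
    exact (memLp_two_iff_integrable_sq hgm).mpr hg2
  have h := integral_mul_le_Lp_mul_Lq_of_nonneg hpq (Filter.Eventually.of_forall hf0)
      (Filter.Eventually.of_forall hg0) hfL hgL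
  have hrw : ∀ h : α → ℝ, (∫ x, h x ^ (2:ℝ) ∂μ) = ∫ x, h x ^ 2 ∂μ := by
    intro h; congr 1; ext x
    rw [show (2:ℝ) = ((2:ℕ):ℝ) by norm_num, Real.rpow_natCast]
  rw [hrw f, hrw g] at h
  have hf2n : 0 ≤ ∫ x, f x ^ 2 ∂μ := integral_nonneg fun x => sq_nonneg _
  have hg2n : 0 ≤ ∫ x, g x ^ 2 ∂μ := integral_nonneg fun x => sq_nonneg _
  have hL : 0 ≤ ∫ x, f x * g x ∂μ :=
    integral_nonneg fun x => mul_nonneg (hf0 x) (hg0 x)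
  calc (∫ x, f x * g x ∂μ) ^ 2
      ≤ ((∫ x, f x ^ 2 ∂μ) ^ (1/(2:ℝ)) * (∫ x, g x ^ 2 ∂μ) ^ (1/(2:ℝ))) ^ 2 :=
        pow_le_pow_left₀ hL h 2
    _ = (∫ x, f x ^ 2 ∂μ) * (∫ x, g x ^ 2 ∂μ) := by
        rw [mul_pow, ← Real.rpow_natCast (_ ^ (1/(2:ℝ))) 2, ← Real.rpow_natCast (_ ^ (1/(2:ℝ))) 2,
          ← Real.rpow_mul hf2n, ← Real.rpow_mul hg2n]
        norm_num

/-- Jensen's inequality for `exp`. -/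
lemma exp_integral_le_integral_exp {α : Type*} [MeasurableSpace α] {ν : Measure α}
    [IsProbabilityMeasure ν] {f : α → ℝ} (hf : Integrable f ν)
    (hef : Integrable (fun x => Real.exp (f x)) ν) :
    Real.exp (∫ x, f x ∂ν) ≤ ∫ x, Real.exp (f x) ∂ν :=
  convexOn_exp.map_integral_le Real.continuous_exp.continuousOn isClosed_univ
    (Filter.Eventually.of_forall fun _ => Set.mem_univ _) hf hef

private lemma pinsker_pointwise' {a b : ℝ} (ha : 0 ≤ a) (hb : 0 < b) :
    (a - b) ^ 2 ≤ (Real.log (a / b) * a - a + b) * ((2 * a + 4 * b) / 3) := by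
  have ht0 : 0 ≤ a / b := div_nonneg ha hb.le
  have hk := pinsker_pointwise ht0
  have hab : a = a / b * b := (div_mul_cancel₀ _ hb.ne').symm
  set t := a / b with ht
  rw [hab]
  have h2 := mul_le_mul_of_nonneg_right hk (sq_nonneg b)
  nlinarith [h2]

set_option maxHeartbeats 1000000 in
theorem stmt_8 {E : Type*} [MeasurableSpace E] (μ : Measure E) [SigmaFinite μ]
    (p q : E → ℝ) (hp_meas : Measurable p) (hq_meas : Measurable q)
    (hp_nonneg : ∀ x, 0 ≤ p x) (hq_nonneg : ∀ x, 0 ≤ q x)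
    (hp_int : Integrable p μ) (hq_int : Integrable q μ)
    (hp_one : ∫ x, p x ∂μ = 1) (hq_one : ∫ x, q x ∂μ = 1)
    (hD_int : Integrable (fun x => Real.log (p x / q x) * p x) μ)
    (hq_pos : ∀ᵐ x ∂μ, p x ≠ 0 → 0 < q x) :
    (∫ x, |p x - q x| ∂μ)
        ≤ 2 * Real.sqrt (1 - Real.exp (-(∫ x, Real.log (p x / q x) * p x ∂μ))) ∧
    (∫ x, |p x - q x| ∂μ) ≤ Real.sqrt (2 * ∫ x, Real.log (p x / q x) * p x ∂μ) := by
  set D := ∫ x, Real.log (p x / q x) * p x ∂μ with hD_def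
  set L := ∫ x, |p x - q x| ∂μ with hL_def
  have hL_nonneg : 0 ≤ L := integral_nonneg fun x => abs_nonneg _
  -- min and max
  have hmin_int : Integrable (fun x => min (p x) (q x)) μ := by
    refine hp_int.mono' ((hp_meas.min hq_meas).aestronglyMeasurable) ?_
    filter_upwards with x
    rw [Real.norm_eq_abs, abs_of_nonneg (le_min (hp_nonneg x) (hq_nonneg x))]
    exact min_le_left _ _
  have hmax_int : Integrable (fun x => max (p x) (q x)) μ := by
    refine (hp_int.add hq_int).mono' ((hp_meas.max hq_meas).aestronglyMeasurable) ?_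
    filter_upwards with x
    simp only [Pi.add_apply]
    rw [Real.norm_eq_abs, abs_of_nonneg (le_max_of_le_left (hp_nonneg x))]
    exact max_le (by linarith [hq_nonneg x]) (by linarith [hp_nonneg x])
  set m := ∫ x, min (p x) (q x) ∂μ with hm_def
  set M := ∫ x, max (p x) (q x) ∂μ with hM_def
  have hm_nonneg : 0 ≤ m := integral_nonneg fun x => le_min (hp_nonneg x) (hq_nonneg x)
  have hm_le_one : m ≤ 1 := by
    rw [← hp_one]; exact integral_mono hmin_int hp_int fun x => min_le_left _ _
  have hmM : m + M = 2 := by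
    rw [hm_def, hM_def, ← integral_add hmin_int hmax_int]
    have heq : ∀ x, min (p x) (q x) + max (p x) (q x) = p x + q x :=
      fun x => min_add_max _ _
    rw [integral_congr_ae (Filter.Eventually.of_forall heq),
      integral_add hp_int hq_int, hp_one, hq_one]
    norm_num
  have hL_eq : L = 2 - 2 * m := by
    have heq : ∀ x, |p x - q x| = max (p x) (q x) - min (p x) (q x) := fun x => by
      rw [abs_sub_comm]; exact (max_sub_min_eq_abs _ _).symm
    rw [hL_def, integral_congr_ae (Filter.Eventually.of_forall heq),
      integral_sub hmax_int hmin_int, ← hM_def, ← hm_def]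
    linarith
  -- sqrt(p*q)
  have hspq_int : Integrable (fun x => Real.sqrt (p x * q x)) μ := by
    refine ((hp_int.add hq_int).div_const 2).mono'
      (((hp_meas.mul hq_meas).sqrt).aestronglyMeasurable) ?_
    filter_upwards with x
    simp only [Pi.add_apply]
    rw [Real.norm_eq_abs, abs_of_nonneg (Real.sqrt_nonneg _)]
    have h1 : p x * q x ≤ ((p x + q x) / 2) ^ 2 := by nlinarith [sq_nonneg (p x - q x)]
    calc Real.sqrt (p x * q x) ≤ Real.sqrt (((p x + q x) / 2) ^ 2) := Real.sqrt_le_sqrt h1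
      _ = (p x + q x) / 2 := Real.sqrt_sq (by linarith [hp_nonneg x, hq_nonneg x])
  set s := ∫ x, Real.sqrt (p x * q x) ∂μ with hs_def
  -- Cauchy–Schwarz: s^2 ≤ m * M
  have hCS1 : s ^ 2 ≤ m * M := by
    have key := integral_mul_sq_le (μ := μ)
      (f := fun x => Real.sqrt (min (p x) (q x))) (g := fun x => Real.sqrt (max (p x) (q x)))
      (fun x => Real.sqrt_nonneg _) (fun x => Real.sqrt_nonneg _)
      ((hp_meas.min hq_meas).sqrt.aestronglyMeasurable)
      ((hp_meas.max hq_meas).sqrt.aestronglyMeasurable)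
      (hmin_int.congr (Filter.Eventually.of_forall fun x =>
        (Real.sq_sqrt (le_min (hp_nonneg x) (hq_nonneg x))).symm))
      (hmax_int.congr (Filter.Eventually.of_forall fun x =>
        (Real.sq_sqrt (le_max_of_le_left (hp_nonneg x))).symm))
    have h1 : ∀ x, Real.sqrt (min (p x) (q x)) * Real.sqrt (max (p x) (q x))
        = Real.sqrt (p x * q x) := by
      intro x
      rw [← Real.sqrt_mul (le_min (hp_nonneg x) (hq_nonneg x)), min_mul_max]
    have h2 : ∀ x, Real.sqrt (min (p x) (q x)) ^ 2 = min (p x) (q x) :=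
      fun x => Real.sq_sqrt (le_min (hp_nonneg x) (hq_nonneg x))
    have h3 : ∀ x, Real.sqrt (max (p x) (q x)) ^ 2 = max (p x) (q x) :=
      fun x => Real.sq_sqrt (le_max_of_le_left (hp_nonneg x))
    rw [integral_congr_ae (Filter.Eventually.of_forall h1),
      integral_congr_ae (Filter.Eventually.of_forall h2),
      integral_congr_ae (Filter.Eventually.of_forall h3)] at key
    exact key
  -- Jensen: exp(-D/2) ≤ s
  have hJ : Real.exp (-D / 2) ≤ s := by
    set pn : E → ℝ≥0 := fun x => (p x).toNNReal with hpn_def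
    have hpn_meas : Measurable pn := hp_meas.real_toNNReal
    set ν := μ.withDensity (fun x => (pn x : ℝ≥0∞)) with hν_def
    have hsmul : ∀ (r : ℝ) (x : E), pn x • r = p x * r := by
      intro r x
      rw [NNReal.smul_def, smul_eq_mul]
      congr 1
      exact Real.coe_toNNReal _ (hp_nonneg x)
    have hProb : IsProbabilityMeasure ν := by
      constructor
      rw [hν_def, withDensity_apply _ MeasurableSet.univ, Measure.restrict_univ]
      have heq : ∫⁻ x, (pn x : ℝ≥0∞) ∂μ = ENNReal.ofReal (∫ x, p x ∂μ) :=
        (ofReal_integral_eq_lintegral_ofReal hp_int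
          (Filter.Eventually.of_forall hp_nonneg)).symm
      rw [heq, hp_one]; norm_num
    set f : E → ℝ := fun x => Real.log (q x / p x) / 2 with hf_def
    have hfx : ∀ x, f x = Real.log (q x / p x) / 2 := fun _ => rfl
    have haemul : ∀ᵐ x ∂μ, p x * f x = -(Real.log (p x / q x) * p x) / 2 := by
      filter_upwards [hq_pos] with x hx
      rw [hfx]
      by_cases hp0 : p x = 0
      · simp [hp0]
      · have hpx : 0 < p x := lt_of_le_of_ne (hp_nonneg x) (Ne.symm hp0)
        have hqx : 0 < q x := hx hp0
        have hlog : Real.log (q x / p x) = -Real.log (p x / q x) := by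
          rw [← Real.log_inv, inv_div]
        rw [hlog]; ring
    have haeexp : ∀ᵐ x ∂μ, p x * Real.exp (f x) = Real.sqrt (p x * q x) := by
      filter_upwards [hq_pos] with x hx
      rw [hfx]
      by_cases hp0 : p x = 0
      · simp [hp0]
      · have hpx : 0 < p x := lt_of_le_of_ne (hp_nonneg x) (Ne.symm hp0)
        have hqx : 0 < q x := hx hp0
        have hr : 0 < q x / p x := div_pos hqx hpx
        have hexp : Real.exp (Real.log (q x / p x) / 2) = Real.sqrt (q x / p x) := by
          rw [← Real.log_sqrt hr.le, Real.exp_log (Real.sqrt_pos.mpr hr)]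
        rw [hexp, ← Real.sqrt_sq (hp_nonneg x), ← Real.sqrt_mul (sq_nonneg _)]
        congr 1
        field_simp
        rw [Real.sq_sqrt (sq_nonneg _)]
    have hf_int : Integrable f ν := by
      rw [hν_def, integrable_withDensity_iff_integrable_smul hpn_meas]
      have hIt : Integrable (fun x => -(Real.log (p x / q x) * p x) / 2) μ :=
        (hD_int.neg).div_const 2
      refine hIt.congr ?_
      filter_upwards [haemul] with x hx
      rw [hsmul, hx]
    have hef_int : Integrable (fun x => Real.exp (f x)) ν := by
      rw [hν_def, integrable_withDensity_iff_integrable_smul hpn_meas]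
      refine hspq_int.congr ?_
      filter_upwards [haeexp] with x hx
      rw [hsmul, hx]
    have hint_f : ∫ x, f x ∂ν = -D / 2 := by
      rw [hν_def, integral_withDensity_eq_integral_smul hpn_meas]
      have heq : ∫ x, pn x • f x ∂μ = ∫ x, -(Real.log (p x / q x) * p x) / 2 ∂μ := by
        refine integral_congr_ae ?_
        filter_upwards [haemul] with x hx
        rw [hsmul, hx]
      rw [heq, integral_div, integral_neg, hD_def]
    have hint_ef : ∫ x, Real.exp (f x) ∂ν = s := by
      rw [hν_def, integral_withDensity_eq_integral_smul hpn_meas, hs_def]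
      refine integral_congr_ae ?_
      filter_upwards [haeexp] with x hx
      rw [hsmul, hx]
    have hJen := exp_integral_le_integral_exp hf_int hef_int
    rw [hint_f, hint_ef] at hJen
    exact hJen
  -- BH core
  have hs_nonneg : 0 ≤ s := integral_nonneg fun x => Real.sqrt_nonneg _
  have hBH : Real.exp (-D) ≤ m * M := by
    calc Real.exp (-D) = Real.exp (-D / 2) ^ 2 := by
          rw [sq, ← Real.exp_add]; ring_nf
      _ ≤ s ^ 2 := pow_le_pow_left₀ (Real.exp_nonneg _) hJ 2
      _ ≤ m * M := hCS1
  have hM_eq : M = 2 - m := by linarith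
  have h1m : (1 - m) ^ 2 ≤ 1 - Real.exp (-D) := by
    rw [hM_eq] at hBH; nlinarith
  have part1 : L ≤ 2 * Real.sqrt (1 - Real.exp (-D)) := by
    have h1 : 1 - m ≤ Real.sqrt (1 - Real.exp (-D)) := by
      rw [show (1 : ℝ) - m = Real.sqrt ((1 - m) ^ 2) from
        (Real.sqrt_sq (by linarith)).symm]
      exact Real.sqrt_le_sqrt h1m
    rw [hL_eq]; linarith
  -- Pinsker
  have part2 : L ≤ Real.sqrt (2 * D) := by
    set w : E → ℝ := fun x => (2 * p x + 4 * q x) / 3 with hw_def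
    have hwx : ∀ x, w x = (2 * p x + 4 * q x) / 3 := fun _ => rfl
    have hw_nonneg : ∀ x, 0 ≤ w x := fun x => by
      rw [hwx]
      have := hp_nonneg x; have := hq_nonneg x
      positivity
    have hw_int : Integrable w μ :=
      ((hp_int.const_mul 2).add (hq_int.const_mul 4)).div_const 3
    have hw_intval : ∫ x, w x ∂μ = 2 := by
      have heq : ∫ x, w x ∂μ = (∫ x, 2 * p x + 4 * q x ∂μ) / 3 := integral_div _ _
      rw [heq, integral_add (hp_int.const_mul 2) (hq_int.const_mul 4),
        integral_const_mul, integral_const_mul, hp_one, hq_one]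
      norm_num
    set v : E → ℝ := fun x => |p x - q x| / Real.sqrt (w x) with hv_def
    have hvx : ∀ x, v x = |p x - q x| / Real.sqrt (w x) := fun _ => rfl
    have hv_nonneg : ∀ x, 0 ≤ v x := fun x => div_nonneg (abs_nonneg _) (Real.sqrt_nonneg _)
    have hv_meas : Measurable v :=
      (hp_meas.sub hq_meas).abs.div
        (((hp_meas.const_mul 2).add (hq_meas.const_mul 4)).div_const 3).sqrt
    set g : E → ℝ := fun x => Real.log (p x / q x) * p x - p x + q x with hg_def
    have hgx : ∀ x, g x = Real.log (p x / q x) * p x - p x + q x := fun _ => rfl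
    have hsub_int : Integrable (fun x => Real.log (p x / q x) * p x - p x) μ :=
      hD_int.sub hp_int
    have hg_int : Integrable g μ := hsub_int.add hq_int
    have hg_intval : ∫ x, g x ∂μ = D := by
      have heq : ∫ x, g x ∂μ
          = ∫ x, (Real.log (p x / q x) * p x - p x) + q x ∂μ := rfl
      rw [heq, integral_add hsub_int hq_int, integral_sub hD_int hp_int,
        hp_one, hq_one, ← hD_def]
      ring
    have hkey : ∀ᵐ x ∂μ, v x ^ 2 ≤ g x := by
      filter_upwards [hq_pos] with x hx
      rw [hvx, hgx]
      by_cases hq0 : q x = 0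
      · have hp0 : p x = 0 := by
          by_contra hp0
          exact absurd (hx hp0) (by rw [hq0]; exact lt_irrefl 0)
        simp [hp0, hq0]
      · have hqx : 0 < q x := lt_of_le_of_ne (hq_nonneg x) (Ne.symm hq0)
        have hwxpos : 0 < w x := by
          rw [hwx]; have := hp_nonneg x; linarith
        have hv2 : (|p x - q x| / Real.sqrt (w x)) ^ 2 = (p x - q x) ^ 2 / w x := by
          rw [div_pow, Real.sq_sqrt hwxpos.le, sq_abs]
        rw [hv2, div_le_iff₀ hwxpos, hwx]
        exact pinsker_pointwise' (hp_nonneg x) hqx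
    have hv2_int : Integrable (fun x => v x ^ 2) μ := by
      refine hg_int.mono' ((hv_meas.pow_const 2).aestronglyMeasurable) ?_
      filter_upwards [hkey] with x hx
      rw [Real.norm_eq_abs, abs_of_nonneg (sq_nonneg _)]
      exact hx
    have hsw2 : Integrable (fun x => Real.sqrt (w x) ^ 2) μ :=
      hw_int.congr (Filter.Eventually.of_forall fun x => (Real.sq_sqrt (hw_nonneg x)).symm)
    have hCS2 := integral_mul_sq_le (μ := μ) (f := fun x => Real.sqrt (w x)) (g := v)
      (fun x => Real.sqrt_nonneg _) hv_nonneg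
      ((((hp_meas.const_mul 2).add (hq_meas.const_mul 4)).div_const 3).sqrt.aestronglyMeasurable)
      hv_meas.aestronglyMeasurable hsw2 hv2_int
    have hprod : ∀ x, Real.sqrt (w x) * v x = |p x - q x| := by
      intro x
      by_cases hw0 : w x = 0
      · have h0 : (2 * p x + 4 * q x) / 3 = 0 := (hwx x).symm.trans hw0
        have hp0 : p x = 0 := by linarith [hp_nonneg x, hq_nonneg x]
        have hq0 : q x = 0 := by linarith [hp_nonneg x, hq_nonneg x]
        rw [hvx]
        simp [hp0, hq0]
      · have hwxpos : 0 < w x := lt_of_le_of_ne (hw_nonneg x) (Ne.symm hw0)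
        rw [hvx, mul_div_cancel₀ _ (ne_of_gt (Real.sqrt_pos.mpr hwxpos))]
    have hsww : ∫ x, Real.sqrt (w x) ^ 2 ∂μ = 2 := by
      rw [← hw_intval]
      exact integral_congr_ae (Filter.Eventually.of_forall fun x => Real.sq_sqrt (hw_nonneg x))
    have hvv : ∫ x, v x ^ 2 ∂μ ≤ D := by
      rw [← hg_intval]
      exact integral_mono_ae hv2_int hg_int hkey
    rw [integral_congr_ae (Filter.Eventually.of_forall hprod), hsww] at hCS2
    have hL2 : L ^ 2 ≤ 2 * D := by
      rw [hL_def]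
      calc (∫ x, |p x - q x| ∂μ) ^ 2 ≤ 2 * ∫ x, v x ^ 2 ∂μ := hCS2
        _ ≤ 2 * D := by linarith
    calc L = Real.sqrt (L ^ 2) := (Real.sqrt_sq hL_nonneg).symm
      _ ≤ Real.sqrt (2 * D) := Real.sqrt_le_sqrt hL2
  exact ⟨part1, part2⟩
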